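/- For every natural number n ≥ 3 and every cardinality l with 2 ≤ l ≤ n−1, the number of l-element subsets of S³(n) whose points have pairwise distinct y-coordinates is strictly greater than the number of l-element subsets whose points have pairwise distinct x-coordinates. -/

import Mathlib

/-- The discrete simplex `S³(n) = {(x,y,z) ∈ ℕ³ : 0 ≤ x < y < z ≤ n}`. -/
def S3 (n : ℕ) : Finset (ℕ × ℕ × ℕ) :=
  (Finset.range (n+1) ×ˢ Finset.range (n+1) ×ˢ Finset.range (n+1)).filter
    (fun p => p.1 < p.2.1 ∧ p.2.1 < p.2.2)


def E (s : Multiset ℕ) (l : ℕ) : ℕ := ((s.powersetCard l).map Multiset.prod).sum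
@[simp] lemma E_zero (s : Multiset ℕ) : E s 0 = 1 := by
  simp [E, Multiset.powersetCard_zero_left]
lemma E_cons (a : ℕ) (s : Multiset ℕ) (l : ℕ) :
    E (a ::ₘ s) (l+1) = E s (l+1) + a * E s l := by
  simp [E, Multiset.powersetCard_cons, Multiset.sum_map_mul_left]
lemma E_cons2 (a b : ℕ) (M : Multiset ℕ) (l : ℕ) :
    E (a ::ₘ b ::ₘ M) (l+2) = E M (l+2) + (a + b) * E M (l+1) + a * b * E M l := by
  rw [E_cons, E_cons, E_cons]; ring
lemma E_eq_zero (s : Multiset ℕ) (l : ℕ) (h : Multiset.card s < l) : E s l = 0 := by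
  simp [E, Multiset.powersetCard_eq_empty _ h]
lemma E_mono_cons (a : ℕ) (s t : Multiset ℕ) (h : ∀ j, E s j ≤ E t j) (l : ℕ) :
    E (a ::ₘ s) l ≤ E (a ::ₘ t) l := by
  cases l with
  | zero => simp
  | succ l => rw [E_cons, E_cons]
              exact Nat.add_le_add (h _) (Nat.mul_le_mul_left a (h _))
lemma E_transfer (M : Multiset ℕ) (a b d : ℕ) (h : b + d ≤ a) (l : ℕ) :
    E (a ::ₘ b ::ₘ M) l ≤ E ((a - d) ::ₘ (b + d) ::ₘ M) l := by
  match l with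
  | 0 => simp
  | 1 =>
    rw [E_cons, E_cons, E_cons, E_cons]
    simp only [E_zero, mul_one]
    omega
  | (l+2) =>
    rw [E_cons2, E_cons2]
    have h1 : a - d + (b + d) = a + b := by omega
    have h2 : a * b ≤ (a - d) * (b + d) := by
      have hd : d ≤ a := by omega
      zify [hd]; nlinarith [h, hd]
    rw [h1]
    exact Nat.add_le_add_left (Nat.mul_le_mul_right _ h2) _
lemma mrange_succ' (n : ℕ) :
    Multiset.range (n+1) = 0 ::ₘ (Multiset.range n).map Nat.succ := by
  rw [Multiset.range, List.range_succ_eq_map]; rfl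

/-- multiset of x-fiber sizes of `S3 (m+3)` (triangular numbers). -/
def Bm (m : ℕ) : Multiset ℕ := (Multiset.range (m+2)).map (fun k => (k+2).choose 2)
/-- multiset of y-fiber sizes of `S3 (m+3)`. -/
def Cm (m : ℕ) : Multiset ℕ := (Multiset.range (m+2)).map (fun k => (k+1)*(m+2-k))

/-- reservoir value after `j` transfer steps. -/
def R (m j : ℕ) : ℕ := (m+3) + ∑ i ∈ Finset.range (m+2-j), (i+j+1)

/-- intermediate multisets in the transfer chain from `Bm (m+1)` to `Cm (m+1)`. -/
def D (m j : ℕ) : Multiset ℕ :=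
  R m j ::ₘ
  ((Multiset.range j).map (fun k => (k+1)*(m+3-k)) +
   (Multiset.range (m+2-j)).map (fun i => (i+j+1)*(m+2-(i+j))))


lemma cons_mid (A Rr : Multiset ℕ) (b : ℕ) : A + (b ::ₘ Rr) = b ::ₘ (A + Rr) := by
  rw [← Multiset.singleton_add, ← Multiset.singleton_add, add_left_comm]

lemma block (m j : ℕ) (hj : j ≤ m + 1) :
    (Multiset.range (m+2-j)).map (fun i => (i+j+1)*(m+2-(i+j)))
      = ((j+1)*(m+2-j)) ::ₘ
        (Multiset.range (m+1-j)).map (fun i => (i+j+2)*(m+2-(i+j+1))) := by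
  rw [show m+2-j = (m+1-j)+1 from by omega, mrange_succ', Multiset.map_cons,
    Multiset.map_map]
  congr 1
  · congr 1 <;> omega
  · apply Multiset.map_congr rfl
    intro i _
    simp only [Function.comp_apply, Nat.succ_eq_add_one]
    congr 1 <;> omega

lemma D_zero (m : ℕ) : D m 0 = R m 0 ::ₘ Cm m := by
  unfold D Cm
  congr 1

lemma D_top (m : ℕ) : D m (m+2) = Cm (m+1) := by
  unfold D Cm R
  rw [show m+2-(m+2) = 0 from by omega]
  simp only [Multiset.range_zero, Multiset.map_zero, add_zero, Finset.sum_range_zero]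
  conv_rhs => rw [show m+1+2 = (m+2)+1 from rfl, Multiset.range_succ, Multiset.map_cons]
  rw [show (m+2+1)*(m+1+2-(m+2)) = m+3 from by
    rw [show m+1+2-(m+2) = 1 from by omega, mul_one]]

lemma D_step (m j : ℕ) (hj : j ≤ m + 1) (l : ℕ) : E (D m j) l ≤ E (D m (j+1)) l := by
  set A : Multiset ℕ := (Multiset.range j).map (fun k => (k+1)*(m+3-k)) with hA
  set Rr : Multiset ℕ :=
    (Multiset.range (m+1-j)).map (fun i => (i+j+2)*(m+2-(i+j+1))) with hR
  have hDj : D m j = R m j ::ₘ ((j+1)*(m+2-j)) ::ₘ (A + Rr) := by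
    unfold D
    rw [block m j hj, cons_mid]
  have hr : R m (j+1) = R m j - (j+1) := by
    unfold R
    rw [show m+2-j = (m+1-j)+1 from by omega, Finset.sum_range_succ',
      show m+2-(j+1) = m+1-j from by omega]
    have he : ∀ i : ℕ, (i + 1 + j + 1 : ℕ) = i + (j+1) + 1 := by omega
    simp only [he, zero_add]
    omega
  have h6 : (j+1)*(m+3-j) = (j+1)*(m+2-j) + (j+1) := by
    rw [show m+3-j = (m+2-j)+1 from by omega, Nat.mul_succ]
  have hDj1 : D m (j+1) = (R m j - (j+1)) ::ₘ ((j+1)*(m+2-j) + (j+1)) ::ₘ (A + Rr) := by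
    unfold D
    rw [hr]
    congr 1
    rw [Multiset.range_succ, Multiset.map_cons, h6, Multiset.cons_add]
    congr 1
    congr 1
    rw [show m+2-(j+1) = m+1-j from by omega]
    apply Multiset.map_congr rfl
    intro i _
    congr 1 <;> omega
  rw [hDj, hDj1]
  apply E_transfer
  unfold R
  have hsum : (m+2-j) * (j+1) ≤ ∑ i ∈ Finset.range (m+2-j), (i+j+1) := by
    calc (m+2-j) * (j+1) = ∑ _i ∈ Finset.range (m+2-j), (j+1) := by
          rw [Finset.sum_const, Finset.card_range, smul_eq_mul]
      _ ≤ ∑ i ∈ Finset.range (m+2-j), (i+j+1) := by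
          apply Finset.sum_le_sum; intro i _; omega
  have hc : (j+1)*(m+2-j) = (m+2-j)*(j+1) := by ring
  omega

lemma D_chain (m : ℕ) : ∀ j, j ≤ m + 2 → ∀ l, E (D m 0) l ≤ E (D m j) l := by
  intro j
  induction j with
  | zero => intro _ l; exact le_rfl
  | succ j ih =>
    intro hj l
    exact le_trans (ih (by omega) l) (D_step m j (by omega) l)

lemma R_zero_eq (m : ℕ) : R m 0 = (m+4).choose 2 := by
  unfold R
  simp only [Nat.sub_zero, Nat.add_zero]
  have h1 : ∑ i ∈ Finset.range (m+2), (i+1) = (∑ i ∈ Finset.range (m+2), i) + (m+2) := by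
    rw [Finset.sum_add_distrib, Finset.sum_const, Finset.card_range, smul_eq_mul, mul_one]
  have h2 := Finset.sum_range_id_mul_two (m+2)
  have h3 : (m+2) * (m+2-1) = (m+2)*(m+1) := by rw [show m+2-1 = m+1 from rfl]
  rw [Nat.choose_two_right]
  have h4 : (m+4) * (m+4-1) = (m+2)*(m+1) + 2*(m+3) + 2*(m+2) := by
    rw [show m+4-1 = m+3 from rfl]; ring
  omega

lemma card_Bm (m : ℕ) : Multiset.card (Bm m) = m + 2 := by simp [Bm]
lemma card_Cm (m : ℕ) : Multiset.card (Cm m) = m + 2 := by simp [Cm]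

theorem BC_main (m : ℕ) :
    (∀ l, E (Bm m) l ≤ E (Cm m) l) ∧
    (∀ l, 2 ≤ l → l ≤ m+2 → E (Bm m) l < E (Cm m) l) := by
  induction m with
  | zero =>
    constructor
    · intro l
      match l with
      | 0 => simp
      | 1 => decide
      | 2 => decide
      | (l+3) =>
        rw [E_eq_zero _ _ (by rw [card_Bm]; omega), E_eq_zero _ _ (by rw [card_Cm]; omega)]
    · intro l h2 hm2
      have : l = 2 := by omega
      subst this
      decide
  | succ m ih =>
    obtain ⟨ihle, ihlt⟩ := ih
    have hBcons : Bm (m+1) = (m+4).choose 2 ::ₘ Bm m := by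
      unfold Bm
      rw [show m+1+2 = (m+2)+1 from rfl, Multiset.range_succ, Multiset.map_cons]
    have hkey : ∀ l, E ((m+4).choose 2 ::ₘ Cm m) l ≤ E (Cm (m+1)) l := by
      intro l
      have h0 : (m+4).choose 2 ::ₘ Cm m = D m 0 := by rw [D_zero, R_zero_eq]
      rw [h0, ← D_top m]
      exact D_chain m (m+2) le_rfl l
    constructor
    · intro l
      rw [hBcons]
      exact le_trans (E_mono_cons _ _ _ ihle l) (hkey l)
    · intro l hl2 hlm
      rw [hBcons]
      refine lt_of_lt_of_le ?_ (hkey l)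
      obtain ⟨l', rfl⟩ : ∃ l', l = l'+1 := ⟨l-1, by omega⟩
      rw [E_cons, E_cons]
      rcases Nat.lt_or_ge (l'+1) (m+3) with h | h
      · exact Nat.add_lt_add_of_lt_of_le (ihlt _ (by omega) (by omega))
          (Nat.mul_le_mul_left _ (ihle l'))
      · have hz1 : E (Bm m) (l'+1) = 0 := E_eq_zero _ _ (by rw [card_Bm]; omega)
        have hz2 : E (Cm m) (l'+1) = 0 := E_eq_zero _ _ (by rw [card_Cm]; omega)
        rw [hz1, hz2]
        apply Nat.add_lt_add_left
        have hpos : 0 < (m+4).choose 2 := Nat.choose_pos (by omega)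
        exact mul_lt_mul_of_pos_left (ihlt l' (by omega) (by omega)) hpos

section Count
variable {α β : Type*} [DecidableEq α] [DecidableEq β]

lemma count_empty (g : α → β) (l : ℕ) :
    (((∅ : Finset α).powersetCard l).filter
        (fun A => ∀ p ∈ A, ∀ q ∈ A, g p = g q → p = q)).card
      = E (((∅ : Finset α).image g).val.map
          (fun v => ((∅ : Finset α).filter (fun a => g a = v)).card)) l := by
  cases l with
  | zero =>
    rw [Finset.powersetCard_zero]
    rw [Finset.filter_singleton]
    simp [E]
  | succ l =>
    rw [Finset.powersetCard_eq_empty.mpr (by simp)]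
    simp only [Finset.card_empty, Finset.image_empty, Finset.empty_val, Multiset.map_zero]
    exact (E_eq_zero 0 (l+1) (by simp)).symm

lemma count_eq (g : α → β) :
    ∀ (N : ℕ) (U : Finset α), U.card ≤ N → ∀ l,
    ((U.powersetCard l).filter
        (fun A => ∀ p ∈ A, ∀ q ∈ A, g p = g q → p = q)).card
      = E ((U.image g).val.map (fun v => (U.filter (fun a => g a = v)).card)) l := by
  intro N
  induction N with
  | zero =>
    intro U hU l
    obtain rfl : U = ∅ := Finset.card_eq_zero.mp (Nat.le_zero.mp hU)
    exact count_empty g l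
  | succ N IH =>
    intro U hU l
    rcases U.eq_empty_or_nonempty with rfl | ⟨a, ha⟩
    · exact count_empty g l
    set v := g a with hv
    set F := U.filter (fun x => g x = v) with hF
    set U' := U.filter (fun x => ¬ g x = v) with hU'
    have haF : a ∈ F := by rw [hF]; simp [Finset.mem_filter, ha, hv]
    have hU'card : U'.card ≤ N := by
      have h1 : U'.card < U.card := by
        apply Finset.card_lt_card
        constructor
        · exact Finset.filter_subset _ _
        · intro hsub
          have := hsub ha
          rw [hU', Finset.mem_filter] at this
          exact this.2 rfl
      omega
    -- image decomposition
    have himv : v ∈ U.image g := Finset.mem_image_of_mem g ha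
    have himage : U.image g = insert v (U'.image g) := by
      ext w
      simp only [Finset.mem_image, Finset.mem_insert, hU', Finset.mem_filter]
      constructor
      · rintro ⟨x, hx, rfl⟩
        by_cases hxv : g x = v
        · exact Or.inl hxv
        · exact Or.inr ⟨x, ⟨hx, hxv⟩, rfl⟩
      · rintro (rfl | ⟨x, ⟨hx, _⟩, rfl⟩)
        · exact ⟨a, ha, rfl⟩
        · exact ⟨x, hx, rfl⟩
    have hvnot : v ∉ U'.image g := by
      simp only [Finset.mem_image, hU', Finset.mem_filter]
      rintro ⟨x, ⟨_, hxv⟩, hgx⟩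
      exact hxv hgx
    have hfib : ∀ w ∈ U'.image g,
        (U.filter (fun x => g x = w)).card = (U'.filter (fun x => g x = w)).card := by
      intro w hw
      have hwv : w ≠ v := fun h => hvnot (h ▸ hw)
      congr 1
      rw [hU', Finset.filter_filter]
      apply Finset.filter_congr
      intro x _
      constructor
      · intro h; exact ⟨fun h' => hwv (h ▸ h'.symm ▸ rfl), h⟩
      · intro h; exact h.2
    have hmult : (U.image g).val.map (fun w => (U.filter (fun x => g x = w)).card)
        = F.card ::ₘ (U'.image g).val.map (fun w => (U'.filter (fun x => g x = w)).card) := by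
      rw [himage, Finset.insert_val_of_notMem hvnot, Multiset.map_cons]
      congr 1
      exact Multiset.map_congr rfl (fun w hw => hfib w hw)
    rw [hmult]
    cases l with
    | zero =>
      rw [Finset.powersetCard_zero, Finset.filter_singleton, if_pos (by simp), E_zero]
      exact Finset.card_singleton _
    | succ l =>
      rw [E_cons, ← IH U' hU'card (l+1), ← IH U' hU'card l]
      set S1 := (U'.powersetCard (l+1)).filter
        (fun A => ∀ p ∈ A, ∀ q ∈ A, g p = g q → p = q) with hS1
      set T := (U'.powersetCard l).filter
        (fun A => ∀ p ∈ A, ∀ q ∈ A, g p = g q → p = q) with hT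
      set S2 := (F ×ˢ T).image (fun x => insert x.1 x.2) with hS2
      have hU'v : ∀ p ∈ U', g p ≠ v := by
        intro p hp
        rw [hU', Finset.mem_filter] at hp
        exact hp.2
      have hU'U : U' ⊆ U := Finset.filter_subset _ _
      have hmemS2 : ∀ A, A ∈ S2 ↔ ∃ x B, x ∈ F ∧ B ∈ T ∧ insert x B = A := by
        intro A
        rw [hS2, Finset.mem_image]
        constructor
        · rintro ⟨⟨x, B⟩, hmem, h⟩
          rw [Finset.mem_product] at hmem
          exact ⟨x, B, hmem.1, hmem.2, h⟩
        · rintro ⟨x, B, hx, hB, h⟩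
          exact ⟨(x, B), Finset.mem_product.mpr ⟨hx, hB⟩, h⟩
      have hsplit : (U.powersetCard (l+1)).filter
          (fun A => ∀ p ∈ A, ∀ q ∈ A, g p = g q → p = q) = S1 ∪ S2 := by
        ext A
        rw [Finset.mem_union, Finset.mem_filter, Finset.mem_powersetCard, hmemS2]
        constructor
        · rintro ⟨⟨hAU, hAcard⟩, hpred⟩
          by_cases hex : ∃ x ∈ A, g x = v
          · right
            obtain ⟨x, hxA, hgx⟩ := hex
            refine ⟨x, A.erase x, ?_, ?_, Finset.insert_erase hxA⟩
            · rw [hF, Finset.mem_filter]; exact ⟨hAU hxA, hgx⟩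
            · rw [hT, Finset.mem_filter, Finset.mem_powersetCard]
              refine ⟨⟨?_, ?_⟩, ?_⟩
              · intro p hp
                have hpA := Finset.mem_of_mem_erase hp
                have hpx : p ≠ x := Finset.ne_of_mem_erase hp
                rw [hU', Finset.mem_filter]
                exact ⟨hAU hpA, fun h => hpx (hpred p hpA x hxA (h.trans hgx.symm))⟩
              · rw [Finset.card_erase_of_mem hxA, hAcard]; omega
              · exact fun p hp q hq h =>
                  hpred p (Finset.mem_of_mem_erase hp) q (Finset.mem_of_mem_erase hq) h
          · left
            push_neg at hex
            rw [hS1, Finset.mem_filter, Finset.mem_powersetCard]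
            refine ⟨⟨?_, hAcard⟩, hpred⟩
            intro p hp
            rw [hU', Finset.mem_filter]
            exact ⟨hAU hp, hex p hp⟩
        · rintro (hA | ⟨x, B, hxF, hBT, rfl⟩)
          · rw [hS1, Finset.mem_filter, Finset.mem_powersetCard] at hA
            exact ⟨⟨hA.1.1.trans hU'U, hA.1.2⟩, hA.2⟩
          · rw [hF, Finset.mem_filter] at hxF
            rw [hT, Finset.mem_filter, Finset.mem_powersetCard] at hBT
            obtain ⟨⟨hBU, hBcard⟩, hpredB⟩ := hBT
            have hxB : x ∉ B := fun hxB => hU'v x (hBU hxB) hxF.2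
            refine ⟨⟨?_, ?_⟩, ?_⟩
            · intro p hp
              rcases Finset.mem_insert.mp hp with rfl | hpB
              · exact hxF.1
              · exact hU'U (hBU hpB)
            · rw [Finset.card_insert_of_notMem hxB, hBcard]
            · intro p hp q hq hpq
              rcases Finset.mem_insert.mp hp with rfl | hpB <;>
                rcases Finset.mem_insert.mp hq with rfl | hqB
              · rfl
              · exact absurd (hpq ▸ hxF.2) (hU'v q (hBU hqB))
              · exact absurd (hpq.symm ▸ hxF.2) (hU'v p (hBU hpB))
              · exact hpredB p hpB q hqB hpq
      have hdisj : Disjoint S1 S2 := by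
        rw [Finset.disjoint_left]
        intro A hA1 hA2
        rw [hmemS2] at hA2
        obtain ⟨x, B, hxF, _, rfl⟩ := hA2
        rw [hF, Finset.mem_filter] at hxF
        rw [hS1, Finset.mem_filter, Finset.mem_powersetCard] at hA1
        exact hU'v x (hA1.1.1 (Finset.mem_insert_self x B)) hxF.2
      have hinj : Set.InjOn (fun x : α × Finset α => insert x.1 x.2) ↑(F ×ˢ T) := by
        rintro ⟨x, B⟩ hxB ⟨x', B'⟩ hxB' h
        rw [Finset.mem_coe, Finset.mem_product] at hxB hxB'
        have hgx : g x = v := by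
          have := hxB.1; rw [hF, Finset.mem_filter] at this; exact this.2
        have hgx' : g x' = v := by
          have := hxB'.1; rw [hF, Finset.mem_filter] at this; exact this.2
        have hBU' : B ⊆ U' := by
          have := hxB.2; rw [hT, Finset.mem_filter, Finset.mem_powersetCard] at this
          exact this.1.1
        have hB'U' : B' ⊆ U' := by
          have := hxB'.2; rw [hT, Finset.mem_filter, Finset.mem_powersetCard] at this
          exact this.1.1
        have hxB0 : x ∉ B := fun hmem => hU'v x (hBU' hmem) hgx
        have hxB0' : x' ∉ B' := fun hmem => hU'v x' (hB'U' hmem) hgx'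
        simp only at h
        have hxx : x = x' := by
          have hmem : x' ∈ insert x B := h ▸ Finset.mem_insert_self x' B'
          rcases Finset.mem_insert.mp hmem with h' | h'
          · exact h'.symm
          · exact absurd hgx' (hU'v x' (hBU' h'))
        subst hxx
        have hBB : B = B' := by
          have h1 : (insert x B).erase x = B := Finset.erase_insert hxB0
          have h2 : (insert x B').erase x = B' := Finset.erase_insert hxB0'
          rw [← h1, ← h2, h]
        rw [hBB]
      rw [hsplit, Finset.card_union_of_disjoint hdisj, hS2,
        Finset.card_image_of_injOn hinj, Finset.card_product]
end Count

lemma mem_S3 {n : ℕ} {p : ℕ × ℕ × ℕ} :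
    p ∈ S3 n ↔ p.1 < p.2.1 ∧ p.2.1 < p.2.2 ∧ p.2.2 ≤ n := by
  unfold S3
  rw [Finset.mem_filter, Finset.mem_product, Finset.mem_product]
  simp only [Finset.mem_range]
  omega

lemma image_fst {n : ℕ} (hn : 3 ≤ n) :
    (S3 n).image (fun p => p.1) = Finset.Icc 0 (n-2) := by
  ext u
  simp only [Finset.mem_image, Finset.mem_Icc]
  constructor
  · rintro ⟨p, hp, rfl⟩
    rw [mem_S3] at hp
    omega
  · rintro ⟨-, hu⟩
    exact ⟨(u, u+1, u+2), mem_S3.mpr (by dsimp only; omega), rfl⟩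

lemma image_snd {n : ℕ} (hn : 3 ≤ n) :
    (S3 n).image (fun p => p.2.1) = Finset.Icc 1 (n-1) := by
  ext v
  simp only [Finset.mem_image, Finset.mem_Icc]
  constructor
  · rintro ⟨p, hp, rfl⟩
    rw [mem_S3] at hp
    omega
  · rintro ⟨h1, h2⟩
    exact ⟨(0, v, n), mem_S3.mpr (by dsimp only; omega), rfl⟩

lemma fiber_snd {n v : ℕ} (h1 : 1 ≤ v) (h2 : v ≤ n - 1) (hn : 3 ≤ n) :
    ((S3 n).filter (fun p => p.2.1 = v)).card = v * (n - v) := by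
  have hset : (S3 n).filter (fun p => p.2.1 = v)
      = (Finset.range v ×ˢ Finset.Icc (v+1) n).image (fun q => (q.1, v, q.2)) := by
    ext p
    rw [Finset.mem_filter, mem_S3, Finset.mem_image]
    constructor
    · rintro ⟨⟨hx, hy, hz⟩, hv⟩
      refine ⟨(p.1, p.2.2), ?_, ?_⟩
      · rw [Finset.mem_product, Finset.mem_range, Finset.mem_Icc]; omega
      · rw [← hv]
    · rintro ⟨q, hq, rfl⟩
      rw [Finset.mem_product, Finset.mem_range, Finset.mem_Icc] at hq
      exact ⟨⟨by dsimp only; omega, by dsimp only; omega, by dsimp only; omega⟩, rfl⟩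
  rw [hset, Finset.card_image_of_injective _ (fun q q' h => by
    simpa [Prod.ext_iff] using h), Finset.card_product, Finset.card_range, Nat.card_Icc]
  congr 1
  omega

lemma card_lt_pairs (s : Finset ℕ) :
    ((s ×ˢ s).filter (fun q => q.1 < q.2)).card = s.card.choose 2 := by
  set L := (s ×ˢ s).filter (fun q => q.1 < q.2) with hL
  set G := (s ×ˢ s).filter (fun q => q.2 < q.1) with hG
  have hcards : L.card = G.card := by
    refine Finset.card_bij' (fun q _ => (q.2, q.1)) (fun q _ => (q.2, q.1)) ?_ ?_ ?_ ?_
    · intro a ha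
      rw [hL, Finset.mem_filter, Finset.mem_product] at ha
      rw [hG, Finset.mem_filter, Finset.mem_product]
      exact ⟨⟨ha.1.2, ha.1.1⟩, ha.2⟩
    · intro a ha
      rw [hG, Finset.mem_filter, Finset.mem_product] at ha
      rw [hL, Finset.mem_filter, Finset.mem_product]
      exact ⟨⟨ha.1.2, ha.1.1⟩, ha.2⟩
    · intro a _; rfl
    · intro a _; rfl
  have hdisj : Disjoint L G := by
    rw [Finset.disjoint_left]
    intro q hq1 hq2
    rw [hL, Finset.mem_filter] at hq1
    rw [hG, Finset.mem_filter] at hq2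
    omega
  have hunion : L ∪ G = s.offDiag := by
    ext q
    rw [Finset.mem_union, hL, hG, Finset.mem_filter, Finset.mem_filter,
      Finset.mem_product, Finset.mem_offDiag]
    constructor
    · rintro (⟨⟨h1, h2⟩, h3⟩ | ⟨⟨h1, h2⟩, h3⟩) <;> exact ⟨h1, h2, by omega⟩
    · rintro ⟨h1, h2, h3⟩
      rcases Nat.lt_or_ge q.1 q.2 with h | h
      · exact Or.inl ⟨⟨h1, h2⟩, h⟩
      · exact Or.inr ⟨⟨h1, h2⟩, by omega⟩
  have hcard : L.card + G.card = s.card * s.card - s.card := by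
    rw [← Finset.card_union_of_disjoint hdisj, hunion, Finset.offDiag_card]
  have hmm : ∀ m : ℕ, m * m - m = m * (m - 1) := by
    intro m
    cases m with
    | zero => simp
    | succ k =>
      have h : (k+1) * (k+1) = (k+1) * k + (k+1) := by ring
      have h2 : (k+1) - 1 = k := rfl
      rw [h2, h]
      omega
  have h2 := hmm s.card
  rw [Nat.choose_two_right]
  omega

lemma fiber_fst {n u : ℕ} (hu : u ≤ n - 2) (hn : 3 ≤ n) :
    ((S3 n).filter (fun p => p.1 = u)).card = (n - u).choose 2 := by
  have hset : (S3 n).filter (fun p => p.1 = u)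
      = (((Finset.Icc (u+1) n) ×ˢ (Finset.Icc (u+1) n)).filter
          (fun q => q.1 < q.2)).image (fun q => (u, q.1, q.2)) := by
    ext p
    rw [Finset.mem_filter, mem_S3, Finset.mem_image]
    constructor
    · rintro ⟨⟨hx, hy, hz⟩, hv⟩
      refine ⟨(p.2.1, p.2.2), ?_, ?_⟩
      · rw [Finset.mem_filter, Finset.mem_product, Finset.mem_Icc, Finset.mem_Icc]
        omega
      · rw [← hv]
    · rintro ⟨q, hq, rfl⟩
      rw [Finset.mem_filter, Finset.mem_product, Finset.mem_Icc, Finset.mem_Icc] at hq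
      exact ⟨⟨by dsimp only; omega, by dsimp only; omega, by dsimp only; omega⟩, rfl⟩
  rw [hset, Finset.card_image_of_injective _ (fun q q' h => by
    simpa [Prod.ext_iff] using h)]
  have := card_lt_pairs (Finset.Icc (u+1) n)
  rw [this, Nat.card_Icc]
  congr 1
  omega

lemma icc_snd {n : ℕ} (hn : 3 ≤ n) :
    (Finset.Icc 1 (n-1)).val.map (fun v => v * (n - v)) = Cm (n-3) := by
  have h1 : Finset.Icc 1 (n-1) = (Finset.range (n-1)).image (fun k => k+1) := by
    ext v
    simp only [Finset.mem_Icc, Finset.mem_image, Finset.mem_range]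
    constructor
    · rintro ⟨h1, h2⟩; exact ⟨v-1, by omega, by omega⟩
    · rintro ⟨k, hk, rfl⟩; omega
  rw [h1, Finset.image_val_of_injOn (fun a _ b _ h => by omega), Finset.range_val,
    Multiset.map_map]
  unfold Cm
  rw [show n-3+2 = n-1 from by omega]
  apply Multiset.map_congr rfl
  intro k hk
  rw [Multiset.mem_range] at hk
  simp only [Function.comp_apply]
  congr 1
  omega

lemma icc_fst {n : ℕ} (hn : 3 ≤ n) :
    (Finset.Icc 0 (n-2)).val.map (fun u => (n - u).choose 2) = Bm (n-3) := by
  have h1 : Finset.Icc 0 (n-2) = (Finset.range (n-2+1)).image (fun k => n-2-k) := by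
    ext u
    simp only [Finset.mem_Icc, Finset.mem_image, Finset.mem_range]
    constructor
    · rintro ⟨-, h2⟩; exact ⟨n-2-u, by omega, by omega⟩
    · rintro ⟨k, hk, rfl⟩; omega
  rw [h1, Finset.image_val_of_injOn (fun a ha b hb h => by
      simp only [Finset.coe_range, Set.mem_Iio] at ha hb; omega),
    Finset.range_val, Multiset.map_map]
  unfold Bm
  rw [show n-3+2 = n-2+1 from by omega]
  apply Multiset.map_congr rfl
  intro k hk
  rw [Multiset.mem_range] at hk
  simp only [Function.comp_apply]
  congr 1
  omega


/-- There are more `l`-element subsets of `S³(n)` with pairwise distinct `y`-coordinates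
than with pairwise distinct `x`-coordinates. -/
theorem stmt0 (n l : ℕ) (hn : 3 ≤ n) (hl2 : 2 ≤ l) (hln : l ≤ n - 1) :
    (((S3 n).powersetCard l).filter
        (fun A => ∀ p ∈ A, ∀ q ∈ A, p.1 = q.1 → p = q)).card <
    (((S3 n).powersetCard l).filter
        (fun A => ∀ p ∈ A, ∀ q ∈ A, p.2.1 = q.2.1 → p = q)).card := by
  have hxm : ((S3 n).image (fun p : ℕ×ℕ×ℕ => p.1)).val.map
      (fun v => ((S3 n).filter (fun a => a.1 = v)).card) = Bm (n-3) := by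
    rw [image_fst hn, ← icc_fst hn]
    apply Multiset.map_congr rfl
    intro u hu
    rw [Finset.mem_val, Finset.mem_Icc] at hu
    exact fiber_fst hu.2 hn
  have hym : ((S3 n).image (fun p : ℕ×ℕ×ℕ => p.2.1)).val.map
      (fun v => ((S3 n).filter (fun a => a.2.1 = v)).card) = Cm (n-3) := by
    rw [image_snd hn, ← icc_snd hn]
    apply Multiset.map_congr rfl
    intro v hv
    rw [Finset.mem_val, Finset.mem_Icc] at hv
    exact fiber_snd hv.1 hv.2 hn
  have hx : (((S3 n).powersetCard l).filter
      (fun A => ∀ p ∈ A, ∀ q ∈ A, p.1 = q.1 → p = q)).card = E (Bm (n-3)) l := by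
    rw [← hxm]
    exact count_eq (fun p : ℕ×ℕ×ℕ => p.1) (S3 n).card (S3 n) le_rfl l
  have hy : (((S3 n).powersetCard l).filter
      (fun A => ∀ p ∈ A, ∀ q ∈ A, p.2.1 = q.2.1 → p = q)).card = E (Cm (n-3)) l := by
    rw [← hym]
    exact count_eq (fun p : ℕ×ℕ×ℕ => p.2.1) (S3 n).card (S3 n) le_rfl l
  rw [hx, hy]
  exact (BC_main (n-3)).2 l hl2 (by omega)
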